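/- With the continuous dual Hahn polynomials S_n(x²;a,b,c) = (a+b)_n (a+c)_n · ₃F₂(-n, a+ix, a-ix; a+b, a+c; 1), for all n ≥ 1 the difference relation S_n(x²;a,b,c) = S_n(x²;a,b+1,c) - n(n+a+c-1)·S_{n-1}(x²;a,b+1,c) holds. -/

import Mathlib

open Finset Complex

/-- Pochhammer symbol `(a)_k = a(a+1)⋯(a+k-1)`. -/
noncomputable def poch (a : ℂ) (k : ℕ) : ℂ := ∏ j ∈ Finset.range k, (a + j)

/-- Terminating hypergeometric series `₃F₂(-n, A, B; C, D; z)`. -/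
noncomputable def F32 (n : ℕ) (A B C D z : ℂ) : ℂ :=
  ∑ k ∈ Finset.range (n + 1),
    poch (-(n : ℂ)) k * poch A k * poch B k / (poch C k * poch D k * (k.factorial : ℂ)) * z ^ k

/-- Continuous dual Hahn polynomial
`S_n(x²;a,b,c) = (a+b)_n (a+c)_n ₃F₂(-n, a+ix, a-ix; a+b, a+c; 1)`. -/
noncomputable def cdHahn (n : ℕ) (x a b c : ℝ) : ℂ :=
  poch ((a : ℂ) + b) n * poch ((a : ℂ) + c) n *
    F32 n ((a : ℂ) + Complex.I * x) ((a : ℂ) - Complex.I * x) ((a : ℂ) + b) ((a : ℂ) + c) 1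

lemma poch_zero (a : ℂ) : poch a 0 = 1 := by simp [poch]

lemma poch_succ (a : ℂ) (k : ℕ) : poch a (k+1) = poch a k * (a + k) :=
  Finset.prod_range_succ _ _

lemma poch_succ' (a : ℂ) (k : ℕ) : poch a (k+1) = a * poch (a+1) k := by
  unfold poch
  rw [Finset.prod_range_succ']
  simp only [Nat.cast_zero, add_zero, Nat.cast_add, Nat.cast_one]
  rw [mul_comm]
  congr 1
  exact Finset.prod_congr rfl fun j _ => by ring

lemma poch_add (a : ℂ) (m k : ℕ) : poch a (m + k) = poch a m * poch (a + m) k := by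
  induction k with
  | zero => simp [poch_zero]
  | succ k ih =>
    rw [← Nat.add_assoc, poch_succ, ih, poch_succ]
    push_cast
    ring

lemma poch_ne_zero_of_real {t : ℝ} (h : ∀ m : ℕ, t ≠ -(m:ℝ)) (k : ℕ) :
    poch (t : ℂ) k ≠ 0 := by
  unfold poch
  rw [Finset.prod_ne_zero_iff]
  intro j _
  have h' : t + (j:ℝ) ≠ 0 := by
    intro h0; exact h j (by linarith)
  intro hc
  apply h'
  have : ((t + j : ℝ) : ℂ) = 0 := by push_cast; exact hc
  exact_mod_cast this

lemma key (N k : ℕ) : (N:ℂ) * poch (-(N:ℂ)+1) k = ((N:ℂ) - k) * poch (-(N:ℂ)) k := by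
  have h1 := poch_succ (-(N:ℂ)) k
  have h2 := poch_succ' (-(N:ℂ)) k
  have := h1.symm.trans h2
  linear_combination this

lemma termwise (m k : ℕ) (hk : k ≤ m + 1) (A B P Q : ℂ)
    (hPk : poch P k ≠ 0) (hP1k : poch (P+1) k ≠ 0) (hQk : poch Q k ≠ 0) :
    poch P (m+1) * poch Q (m+1) *
      (poch (-((m:ℂ)+1)) k * poch A k * poch B k /
        (poch P k * poch Q k * (k.factorial:ℂ)) * 1^k)
    = poch (P+1) (m+1) * poch Q (m+1) *
      (poch (-((m:ℂ)+1)) k * poch A k * poch B k /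
        (poch (P+1) k * poch Q k * (k.factorial:ℂ)) * 1^k)
    - ((m:ℂ)+1) * (((m:ℂ)+1) + Q - 1) * (poch (P+1) m * poch Q m *
      (poch (-(m:ℂ)) k * poch A k * poch B k /
        (poch (P+1) k * poch Q k * (k.factorial:ℂ)) * 1^k)) := by
  have hfac : (k.factorial : ℂ) ≠ 0 := by exact_mod_cast k.factorial_ne_zero
  have hm1 : ((m:ℂ)+1) ≠ 0 := by
    have : ((m+1:ℕ):ℂ) ≠ 0 := Nat.cast_ne_zero.mpr (Nat.succ_ne_zero m)
    push_cast at this; exact this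
  have ekey : ((m:ℂ)+1) * poch (-(m:ℂ)) k = (((m:ℂ)+1) - k) * poch (-((m:ℂ)+1)) k := by
    have h := key (m+1) k
    push_cast at h
    rw [show (-((m:ℂ)+1)+1) = -(m:ℂ) by ring] at h
    exact h
  have eG' : poch (-(m:ℂ)) k = (((m:ℂ)+1) - k) * poch (-((m:ℂ)+1)) k / ((m:ℂ)+1) := by
    rw [eq_div_iff hm1]
    linear_combination ekey
  obtain ⟨j, hj⟩ := Nat.exists_eq_add_of_le hk
  have e1 : poch P (m+1) = poch P k * poch (P + k) j := by rw [hj, poch_add]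
  have e2 : poch (P+1) (m+1) = poch (P+1) k * poch (P+1+k) j := by rw [hj, poch_add]
  rcases j with _ | j'
  · -- k = m+1
    have hk' : k = m + 1 := by omega
    subst hk'
    have hz : poch (-(m:ℂ)) (m+1) = 0 := by
      rw [poch_succ]; simp
    rw [hz]
    simp only [zero_mul, mul_zero, zero_div, sub_zero, one_pow, mul_one]
    field_simp
  · have hj' : m = k + j' := by omega
    have hcast : (m:ℂ) = (k:ℂ) + j' := by exact_mod_cast hj'
    have e3 : poch (P+1) m = poch (P+1) k * poch (P+1+k) j' := by rw [hj', poch_add]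
    have e4 : poch (P+k) (j'+1) = (P+k) * poch (P+k+1) j' := poch_succ' _ _
    have e4' : poch (P+1+k) j' = poch (P+k+1) j' := by
      rw [show (P+1+(k:ℂ)) = P+(k:ℂ)+1 by ring]
    have e5 : poch (P+1+k) (j'+1) = poch (P+1+k) j' * (P+1+k+j') := poch_succ _ _
    have ethird :
        ((m:ℂ)+1) * (((m:ℂ)+1) + Q - 1) * (poch (P+1) m * poch Q m *
          (poch (-(m:ℂ)) k * poch A k * poch B k /
            (poch (P+1) k * poch Q k * (k.factorial:ℂ)) * 1^k))
        = (((m:ℂ)+1) - k) * (((m:ℂ)+1) + Q - 1) * (poch (P+1) m * poch Q m *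
          (poch (-((m:ℂ)+1)) k * poch A k * poch B k /
            (poch (P+1) k * poch Q k * (k.factorial:ℂ)) * 1^k)) := by
      linear_combination ((((m:ℂ)+1) + Q - 1) * (poch (P+1) m * poch Q m) *
        (poch A k * poch B k / (poch (P+1) k * poch Q k * (k.factorial:ℂ)) * 1^k)) * ekey
    rw [ethird, e1, e2, e3, e4, e5, e4', poch_succ Q m, hcast]
    field_simp
    ring

/-- Difference relation
`S_n(x²;a,b,c) = S_n(x²;a,b+1,c) - n(n+a+c-1)·S_{n-1}(x²;a,b+1,c)` for `n ≥ 1`. -/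
theorem cdHahn_difference_relation_two (n : ℕ) (hn : 1 ≤ n) (x a b c : ℝ)
    (hab : ∀ m : ℕ, a + b ≠ -(m : ℝ)) (hac : ∀ m : ℕ, a + c ≠ -(m : ℝ)) :
    cdHahn n x a b c =
      cdHahn n x a (b + 1) c - (n : ℂ) * ((n : ℂ) + a + c - 1) * cdHahn (n - 1) x a (b + 1) c := by
  obtain ⟨m, rfl⟩ : ∃ m, n = m + 1 := ⟨n - 1, (Nat.succ_pred_eq_of_pos hn).symm⟩
  simp only [Nat.add_sub_cancel]
  have hab1 : ∀ m : ℕ, a + (b + 1) ≠ -(m : ℝ) := by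
    intro m h
    exact hab (m + 1) (by push_cast; linarith)
  have hP : ∀ k, poch ((a:ℂ) + b) k ≠ 0 := by
    intro k
    have h := poch_ne_zero_of_real hab k
    rwa [Complex.ofReal_add] at h
  have hP1 : ∀ k, poch ((a:ℂ) + b + 1) k ≠ 0 := by
    intro k
    have h := poch_ne_zero_of_real hab1 k
    have e : ((a + (b + 1) : ℝ) : ℂ) = (a:ℂ) + b + 1 := by push_cast; ring
    rwa [e] at h
  have hQ : ∀ k, poch ((a:ℂ) + c) k ≠ 0 := by
    intro k
    have h := poch_ne_zero_of_real hac k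
    rwa [Complex.ofReal_add] at h
  unfold cdHahn F32
  have hz : poch (-(m:ℂ)) (m+1) = 0 := by rw [poch_succ]; simp
  have hS : (∑ k ∈ Finset.range (m + 1),
        poch (-(m:ℂ)) k * poch ((a:ℂ) + Complex.I * x) k * poch ((a:ℂ) - Complex.I * x) k /
          (poch ((a:ℂ) + ((b+1:ℝ):ℂ)) k * poch ((a:ℂ) + c) k * (k.factorial : ℂ)) * (1:ℂ) ^ k)
      = ∑ k ∈ Finset.range (m + 1 + 1),
        poch (-(m:ℂ)) k * poch ((a:ℂ) + Complex.I * x) k * poch ((a:ℂ) - Complex.I * x) k /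
          (poch ((a:ℂ) + ((b+1:ℝ):ℂ)) k * poch ((a:ℂ) + c) k * (k.factorial : ℂ)) * (1:ℂ) ^ k := by
    conv_rhs => rw [Finset.sum_range_succ]
    rw [hz]
    simp
  rw [hS]
  simp only [Finset.mul_sum]
  rw [← Finset.sum_sub_distrib]
  refine Finset.sum_congr rfl fun k hk => ?_
  have hk' : k ≤ m + 1 := by
    simp only [Finset.mem_range] at hk; omega
  have ht := termwise m k hk' ((a:ℂ) + Complex.I * x) ((a:ℂ) - Complex.I * x)
    ((a:ℂ) + b) ((a:ℂ) + c) (hP k) (hP1 k) (hQ k)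
  push_cast
  linear_combination (norm := ring_nf) ht
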